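/- Let d ≥ 4. Define the following subspaces of M(d,d): V_t = span{I_d, J_d − I_d}; V_s = 𝔻_{d,2} + 𝕊_{d,2} + 𝔸_{d,1}; V_x = 𝔸_{d,2}; V_y = 𝕊_{d,3}. Then M(d,d) = V_t ⊕ V_s ⊕ V_x ⊕ V_y, the four summands are pairwise orthogonal with respect to the Frobenius inner product and each is invariant under the diagonal S_d-action, and their dimensions are respectively 2, 3(d−1), (d−1)(d−2)/2, and d(d−3)/2. -/

import Mathlib

open Matrix

/-- The permutation matrix of `σ`. -/
def permMat {d : ℕ} (σ : Equiv.Perm (Fin d)) : Matrix (Fin d) (Fin d) ℝ :=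
  Matrix.of fun i j => if σ j = i then (1 : ℝ) else 0

/-- The all-ones matrix. -/
def Jmat (d : ℕ) : Matrix (Fin d) (Fin d) ℝ := Matrix.of fun _ _ => (1 : ℝ)

/-- `𝔻_{d,2}`: trace-zero diagonal matrices. -/
def Dd2 (d : ℕ) : Submodule ℝ (Matrix (Fin d) (Fin d) ℝ) where
  carrier := {A | (∀ i j, i ≠ j → A i j = 0) ∧ ∑ i, A i i = 0}
  zero_mem' := ⟨fun i j _ => rfl, by simp⟩
  add_mem' := by
    rintro a b ⟨ha1, ha2⟩ ⟨hb1, hb2⟩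
    refine ⟨fun i j hij => ?_, ?_⟩
    · simp [Matrix.add_apply, ha1 i j hij, hb1 i j hij]
    · simp [Matrix.add_apply, Finset.sum_add_distrib, ha2, hb2]
  smul_mem' := by
    rintro c a ⟨ha1, ha2⟩
    refine ⟨fun i j hij => ?_, ?_⟩
    · simp [Matrix.smul_apply, ha1 i j hij]
    · simp [Matrix.smul_apply, ← Finset.mul_sum, ha2]

/-- `𝕊_{d,2}`: symmetric, zero diagonal, off-diagonal entries `x i + x j`, `∑ x = 0`. -/
def Sd2 (d : ℕ) : Submodule ℝ (Matrix (Fin d) (Fin d) ℝ) where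
  carrier := {A | ∃ x : Fin d → ℝ, (∑ i, x i = 0) ∧ (∀ i, A i i = 0) ∧
    ∀ i j, i ≠ j → A i j = x i + x j}
  zero_mem' := ⟨0, by simp, fun i => rfl, fun i j _ => by simp⟩
  add_mem' := by
    rintro a b ⟨x, hx0, hxd, hx⟩ ⟨y, hy0, hyd, hy⟩
    refine ⟨x + y, by simp [Finset.sum_add_distrib, hx0, hy0], fun i => ?_,
      fun i j hij => ?_⟩
    · simp [Matrix.add_apply, hxd i, hyd i]
    · simp [Matrix.add_apply, hx i j hij, hy i j hij]; ring
  smul_mem' := by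
    rintro c a ⟨x, hx0, hxd, hx⟩
    refine ⟨c • x, by simp [← Finset.mul_sum, hx0], fun i => ?_, fun i j hij => ?_⟩
    · simp [Matrix.smul_apply, hxd i]
    · simp [Matrix.smul_apply, hx i j hij]; ring

/-- `𝔸_{d,1}`: matrices with `A i j = x i − x j` for some `x ∈ ℝᵈ`. -/
def Ad1 (d : ℕ) : Submodule ℝ (Matrix (Fin d) (Fin d) ℝ) where
  carrier := {A | ∃ x : Fin d → ℝ, ∀ i j, A i j = x i - x j}
  zero_mem' := ⟨0, by simp⟩
  add_mem' := by
    rintro a b ⟨x, hx⟩ ⟨y, hy⟩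
    refine ⟨x + y, fun i j => ?_⟩
    simp [Matrix.add_apply, hx, hy]; ring
  smul_mem' := by
    rintro c a ⟨x, hx⟩
    refine ⟨c • x, fun i j => ?_⟩
    simp [Matrix.smul_apply, hx]; ring

/-- `𝔸_{d,2}`: skew-symmetric matrices with all row sums zero. -/
def Ad2 (d : ℕ) : Submodule ℝ (Matrix (Fin d) (Fin d) ℝ) where
  carrier := {A | Aᵀ = -A ∧ ∀ i, ∑ j, A i j = 0}
  zero_mem' := ⟨by simp, by simp⟩
  add_mem' := by
    rintro a b ⟨ha1, ha2⟩ ⟨hb1, hb2⟩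
    refine ⟨by rw [Matrix.transpose_add, ha1, hb1, neg_add], fun i => ?_⟩
    simp [Matrix.add_apply, Finset.sum_add_distrib, ha2 i, hb2 i]
  smul_mem' := by
    rintro c a ⟨ha1, ha2⟩
    refine ⟨by rw [Matrix.transpose_smul, ha1, smul_neg], fun i => ?_⟩
    simp [Matrix.smul_apply, ← Finset.mul_sum, ha2 i]

/-- `𝕊_{d,3}`: symmetric, zero diagonal, all row sums zero. -/
def Sd3 (d : ℕ) : Submodule ℝ (Matrix (Fin d) (Fin d) ℝ) where
  carrier := {A | Aᵀ = A ∧ (∀ i, A i i = 0) ∧ ∀ i, ∑ j, A i j = 0}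
  zero_mem' := ⟨by simp, fun i => rfl, by simp⟩
  add_mem' := by
    rintro a b ⟨ha1, ha2, ha3⟩ ⟨hb1, hb2, hb3⟩
    refine ⟨by rw [Matrix.transpose_add, ha1, hb1], fun i => ?_, fun i => ?_⟩
    · simp [Matrix.add_apply, ha2 i, hb2 i]
    · simp [Matrix.add_apply, Finset.sum_add_distrib, ha3 i, hb3 i]
  smul_mem' := by
    rintro c a ⟨ha1, ha2, ha3⟩
    refine ⟨by rw [Matrix.transpose_smul, ha1], fun i => ?_, fun i => ?_⟩
    · simp [Matrix.smul_apply, ha2 i]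
    · simp [Matrix.smul_apply, ← Finset.mul_sum, ha3 i]

/-- `V_t = span{I, J − I}`, the trivial isotypic component. -/
def Vt (d : ℕ) : Submodule ℝ (Matrix (Fin d) (Fin d) ℝ) :=
  Submodule.span ℝ {(1 : Matrix (Fin d) (Fin d) ℝ), Jmat d - 1}

/-- `V_s = 𝔻_{d,2} + 𝕊_{d,2} + 𝔸_{d,1}`, the standard isotypic component. -/
def Vs (d : ℕ) : Submodule ℝ (Matrix (Fin d) (Fin d) ℝ) := Dd2 d ⊔ Sd2 d ⊔ Ad1 d

noncomputable def ip {d : ℕ} (A B : Matrix (Fin d) (Fin d) ℝ) : ℝ := Matrix.trace (Aᵀ * B)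

lemma ip_eq_sum {d : ℕ} (A B : Matrix (Fin d) (Fin d) ℝ) :
    ip A B = ∑ i, ∑ j, A i j * B i j := by
  simp only [ip, Matrix.trace, Matrix.mul_apply, Matrix.diag_apply, Matrix.transpose_apply]
  rw [Finset.sum_comm]

lemma ip_comm {d : ℕ} (A B : Matrix (Fin d) (Fin d) ℝ) : ip A B = ip B A := by
  simp only [ip_eq_sum, mul_comm]

lemma sum_ite_ne {d : ℕ} (i : Fin d) (g : Fin d → ℝ) :
    ∑ j, (if i = j then 0 else g j) = (∑ j, g j) - g i := by
  have h : ∀ j, (if i = j then (0:ℝ) else g j) = g j - (if j = i then g j else 0) := by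
    intro j
    by_cases hj : j = i
    · simp [hj]
    · simp [hj, Ne.symm hj]
  simp only [h]
  rw [Finset.sum_sub_distrib, Finset.sum_ite_eq' Finset.univ i g]
  simp

lemma permMat_mul_apply {d : ℕ} (σ : Equiv.Perm (Fin d)) (A : Matrix (Fin d) (Fin d) ℝ)
    (i l : Fin d) : (permMat σ * A) i l = A (σ⁻¹ i) l := by
  rw [Matrix.mul_apply]
  rw [Finset.sum_eq_single (σ⁻¹ i)]
  · simp [permMat]
  · intro k _ hk
    have : σ k ≠ i := fun h => hk (by simp [← h])
    simp [permMat, this]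
  · simp

lemma mul_permMatT_apply {d : ℕ} (σ : Equiv.Perm (Fin d)) (B : Matrix (Fin d) (Fin d) ℝ)
    (i j : Fin d) : (B * (permMat σ)ᵀ) i j = B i (σ⁻¹ j) := by
  rw [Matrix.mul_apply]
  rw [Finset.sum_eq_single (σ⁻¹ j)]
  · simp [permMat]
  · intro l _ hl
    have : σ l ≠ j := fun h => hl (by simp [← h])
    simp [permMat, this]
  · simp

lemma conj_apply {d : ℕ} (σ : Equiv.Perm (Fin d)) (A : Matrix (Fin d) (Fin d) ℝ)
    (i j : Fin d) : (permMat σ * A * (permMat σ)ᵀ) i j = A (σ⁻¹ i) (σ⁻¹ j) := by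
  rw [mul_permMatT_apply, permMat_mul_apply]

lemma ip_add_left {d : ℕ} (A B C : Matrix (Fin d) (Fin d) ℝ) :
    ip (A + B) C = ip A C + ip B C := by
  simp [ip_eq_sum, Matrix.add_apply, add_mul, Finset.sum_add_distrib]

lemma ip_smul_left {d : ℕ} (c : ℝ) (A C : Matrix (Fin d) (Fin d) ℝ) :
    ip (c • A) C = c * ip A C := by
  simp [ip_eq_sum, Matrix.smul_apply, mul_assoc, Finset.mul_sum]

lemma ip_add_right {d : ℕ} (A B C : Matrix (Fin d) (Fin d) ℝ) :
    ip A (B + C) = ip A B + ip A C := by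
  rw [ip_comm, ip_add_left, ip_comm B A, ip_comm C A]

lemma ip_self_eq_zero {d : ℕ} {A : Matrix (Fin d) (Fin d) ℝ} (h : ip A A = 0) : A = 0 := by
  rw [ip_eq_sum] at h
  ext i j
  have h1 : ∀ i ∈ Finset.univ, (0:ℝ) ≤ ∑ j, A i j * A i j :=
    fun i _ => Finset.sum_nonneg fun j _ => mul_self_nonneg _
  have h2 := (Finset.sum_eq_zero_iff_of_nonneg h1).mp h i (Finset.mem_univ i)
  have h3 := (Finset.sum_eq_zero_iff_of_nonneg
    (fun j _ => mul_self_nonneg (A i j))).mp h2 j (Finset.mem_univ j)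
  have := mul_self_eq_zero.mp h3
  simpa using this

lemma orth_sup_left {d : ℕ} {U V W : Submodule ℝ (Matrix (Fin d) (Fin d) ℝ)}
    (h1 : ∀ A ∈ U, ∀ B ∈ W, ip A B = 0) (h2 : ∀ A ∈ V, ∀ B ∈ W, ip A B = 0) :
    ∀ A ∈ U ⊔ V, ∀ B ∈ W, ip A B = 0 := by
  intro A hA B hB
  obtain ⟨a, ha, b, hb, rfl⟩ := Submodule.mem_sup.mp hA
  rw [ip_add_left, h1 a ha B hB, h2 b hb B hB, add_zero]

lemma orth_sup_right {d : ℕ} {U V W : Submodule ℝ (Matrix (Fin d) (Fin d) ℝ)}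
    (h1 : ∀ A ∈ U, ∀ B ∈ V, ip A B = 0) (h2 : ∀ A ∈ U, ∀ B ∈ W, ip A B = 0) :
    ∀ A ∈ U, ∀ B ∈ V ⊔ W, ip A B = 0 := by
  intro A hA B hB
  obtain ⟨a, ha, b, hb, rfl⟩ := Submodule.mem_sup.mp hB
  rw [ip_add_right, h1 A hA a ha, h2 A hA b hb, add_zero]

lemma inf_eq_bot_of_orth {d : ℕ} {U V : Submodule ℝ (Matrix (Fin d) (Fin d) ℝ)}
    (h : ∀ A ∈ U, ∀ B ∈ V, ip A B = 0) : U ⊓ V = ⊥ := by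
  rw [eq_bot_iff]
  rintro A ⟨hU, hV⟩
  exact ip_self_eq_zero (h A hU A hV)

lemma ip_symm_skew {d : ℕ} {A B : Matrix (Fin d) (Fin d) ℝ}
    (hA : ∀ i j, A j i = A i j) (hB : ∀ i j, B j i = -B i j) : ip A B = 0 := by
  have key : ip A B = -ip A B := by
    calc ip A B = ∑ i, ∑ j, A i j * B i j := ip_eq_sum A B
    _ = ∑ j, ∑ i, A i j * B i j := Finset.sum_comm
    _ = ∑ j, ∑ i, A j i * -(B j i) := by
          refine Finset.sum_congr rfl fun j _ => Finset.sum_congr rfl fun i _ => ?_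
          rw [hA j i, hB j i]
    _ = -ip A B := by rw [ip_eq_sum]; simp
  linarith


lemma ip_sub_left {d : ℕ} (A B C : Matrix (Fin d) (Fin d) ℝ) :
    ip (A - B) C = ip A C - ip B C := by
  simp [ip_eq_sum, Matrix.sub_apply, sub_mul, Finset.sum_sub_distrib]

lemma ip_one {d : ℕ} (B : Matrix (Fin d) (Fin d) ℝ) : ip 1 B = ∑ i, B i i := by
  simp only [ip_eq_sum, Matrix.one_apply, ite_mul, one_mul, zero_mul]
  exact Finset.sum_congr rfl fun i _ => by rw [Finset.sum_ite_eq Finset.univ i]; simp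

lemma ip_J {d : ℕ} (B : Matrix (Fin d) (Fin d) ℝ) : ip (Jmat d) B = ∑ i, ∑ j, B i j := by
  simp [ip_eq_sum, Jmat]

lemma ip_vt_of {d : ℕ} (B : Matrix (Fin d) (Fin d) ℝ) (htr : ∑ i, B i i = 0)
    (htot : ∑ i, ∑ j, B i j = 0) : ∀ A ∈ Vt d, ip A B = 0 := by
  intro A hA
  obtain ⟨a, b, rfl⟩ := Submodule.mem_span_pair.mp hA
  rw [ip_add_left, ip_smul_left, ip_smul_left, ip_sub_left, ip_one, ip_J, htr, htot]
  ring

lemma sum_exception {d : ℕ} (f g : Fin d → ℝ) (i : Fin d) (h : ∀ j, j ≠ i → f j = g j) :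
    ∑ j, f j = ((∑ j, g j) - g i) + f i := by
  rw [← Finset.sum_erase_add _ _ (Finset.mem_univ i),
    Finset.sum_congr rfl (fun j hj => h j (Finset.ne_of_mem_erase hj)),
    Finset.sum_erase_eq_sub (Finset.mem_univ i)]

lemma skew_apply {d : ℕ} {B : Matrix (Fin d) (Fin d) ℝ} (h : Bᵀ = -B) (i j : Fin d) :
    B j i = -B i j := by
  have := congrFun (congrFun h i) j
  simpa using this

lemma skew_diag {d : ℕ} {B : Matrix (Fin d) (Fin d) ℝ} (h : Bᵀ = -B) (i : Fin d) :
    B i i = 0 := by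
  have := skew_apply h i i; linarith

lemma symm_apply {d : ℕ} {B : Matrix (Fin d) (Fin d) ℝ} (h : Bᵀ = B) (i j : Fin d) :
    B j i = B i j := by
  have := congrFun (congrFun h i) j
  simpa using this

-- Vt orthogonalities
lemma vt_dd2 {d : ℕ} : ∀ A ∈ Vt d, ∀ B ∈ Dd2 d, ip A B = 0 := by
  rintro A hA B ⟨hB1, hB2⟩
  refine ip_vt_of B hB2 ?_ A hA
  rw [Finset.sum_congr rfl fun i _ => Finset.sum_eq_single i
    (fun j _ hj => hB1 i j (Ne.symm hj)) (by simp)]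
  exact hB2

lemma vt_sd2 {d : ℕ} : ∀ A ∈ Vt d, ∀ B ∈ Sd2 d, ip A B = 0 := by
  rintro A hA B ⟨x, hx0, hxd, hx⟩
  refine ip_vt_of B (by simp [hxd]) ?_ A hA
  have hrow : ∀ i, ∑ j, B i j = ((∑ j, (x i + x j)) - (x i + x i)) + 0 := fun i =>
    sum_exception _ _ i (fun j hj => hx i j (Ne.symm hj)) |>.trans (by rw [hxd i])
  have key : ∀ i, ((∑ j, (x i + x j)) - (x i + x i)) + 0 = (d:ℝ) * x i + (∑ j, x j) - 2 * x i := by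
    intro i
    simp [Finset.sum_add_distrib, Finset.sum_const, Finset.card_univ]
    ring
  simp only [hrow, key]
  simp [Finset.sum_add_distrib, Finset.sum_sub_distrib, ← Finset.mul_sum, hx0]

lemma vt_ad1 {d : ℕ} : ∀ A ∈ Vt d, ∀ B ∈ Ad1 d, ip A B = 0 := by
  rintro A hA B ⟨x, hx⟩
  refine ip_vt_of B (by simp [hx]) ?_ A hA
  simp [hx, Finset.sum_sub_distrib, Finset.sum_const, Finset.card_univ]
  simp [← Finset.mul_sum]

lemma vt_ad2 {d : ℕ} : ∀ A ∈ Vt d, ∀ B ∈ Ad2 d, ip A B = 0 := by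
  rintro A hA B ⟨hB1, hB2⟩
  exact ip_vt_of B (by simp [skew_diag hB1]) (by simp [hB2]) A hA

lemma vt_sd3 {d : ℕ} : ∀ A ∈ Vt d, ∀ B ∈ Sd3 d, ip A B = 0 := by
  rintro A hA B ⟨hB1, hB2, hB3⟩
  exact ip_vt_of B (by simp [hB2]) (by simp [hB3]) A hA

lemma dd2_symm {d : ℕ} {B : Matrix (Fin d) (Fin d) ℝ} (hB : B ∈ Dd2 d) :
    ∀ i j, B j i = B i j := by
  intro i j
  by_cases h : i = j
  · rw [h]
  · rw [hB.1 i j h, hB.1 j i (Ne.symm h)]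

lemma sd2_symm {d : ℕ} {x : Fin d → ℝ} {B : Matrix (Fin d) (Fin d) ℝ}
    (hxd : ∀ i, B i i = 0) (hx : ∀ i j, i ≠ j → B i j = x i + x j) :
    ∀ i j, B j i = B i j := by
  intro i j
  by_cases h : i = j
  · rw [h]
  · rw [hx i j h, hx j i (Ne.symm h)]; ring

lemma dd2_ad2 {d : ℕ} : ∀ A ∈ Dd2 d, ∀ B ∈ Ad2 d, ip A B = 0 := by
  rintro A hA B ⟨hB1, _⟩
  exact ip_symm_skew (dd2_symm hA) (skew_apply hB1)

lemma sd2_ad2 {d : ℕ} : ∀ A ∈ Sd2 d, ∀ B ∈ Ad2 d, ip A B = 0 := by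
  rintro A ⟨x, _, hxd, hx⟩ B ⟨hB1, _⟩
  exact ip_symm_skew (sd2_symm hxd hx) (skew_apply hB1)

lemma ad1_ad2 {d : ℕ} : ∀ A ∈ Ad1 d, ∀ B ∈ Ad2 d, ip A B = 0 := by
  rintro A ⟨x, hx⟩ B ⟨hB1, hB2⟩
  rw [ip_eq_sum]
  have hcol : ∀ j, ∑ i, B i j = 0 := by
    intro j
    have : ∑ i, B i j = ∑ i, -(B j i) := Finset.sum_congr rfl fun i _ => by
      rw [skew_apply hB1]
    rw [this, Finset.sum_neg_distrib, hB2 j, neg_zero]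
  have : ∀ i j, A i j * B i j = x i * B i j - x j * B i j := fun i j => by
    rw [hx i j]; ring
  simp only [this, Finset.sum_sub_distrib]
  rw [Finset.sum_comm (f := fun i j => x j * B i j)]
  simp only [← Finset.mul_sum, hB2, hcol, mul_zero]
  simp

lemma dd2_sd3 {d : ℕ} : ∀ A ∈ Dd2 d, ∀ B ∈ Sd3 d, ip A B = 0 := by
  rintro A ⟨hA1, _⟩ B ⟨_, hB2, _⟩
  rw [ip_eq_sum]
  refine Finset.sum_eq_zero fun i _ => Finset.sum_eq_zero fun j _ => ?_
  by_cases h : i = j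
  · subst h; rw [hB2 i, mul_zero]
  · rw [hA1 i j h, zero_mul]

lemma sd2_sd3 {d : ℕ} : ∀ A ∈ Sd2 d, ∀ B ∈ Sd3 d, ip A B = 0 := by
  rintro A ⟨x, _, hxd, hx⟩ B ⟨hB1, hB2, hB3⟩
  rw [ip_eq_sum]
  have hcol : ∀ j, ∑ i, B i j = 0 := by
    intro j
    have : ∑ i, B i j = ∑ i, B j i := Finset.sum_congr rfl fun i _ => by
      rw [symm_apply hB1]
    rw [this, hB3 j]
  have key : ∀ i j, A i j * B i j = x i * B i j + x j * B i j := by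
    intro i j
    by_cases h : i = j
    · subst h; rw [hB2 i]; ring
    · rw [hx i j h]; ring
  simp only [key, Finset.sum_add_distrib]
  rw [Finset.sum_comm (f := fun i j => x j * B i j)]
  simp only [← Finset.mul_sum, hB3, hcol, mul_zero]
  simp

lemma ad1_sd3 {d : ℕ} : ∀ A ∈ Ad1 d, ∀ B ∈ Sd3 d, ip A B = 0 := by
  rintro A ⟨x, hx⟩ B ⟨hB1, _, _⟩
  rw [ip_comm]
  refine ip_symm_skew (symm_apply hB1) fun i j => ?_
  rw [hx i j, hx j i]; ring

lemma ad2_sd3 {d : ℕ} : ∀ A ∈ Ad2 d, ∀ B ∈ Sd3 d, ip A B = 0 := by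
  rintro A ⟨hA1, _⟩ B ⟨hB1, _, _⟩
  rw [ip_comm]
  exact ip_symm_skew (symm_apply hB1) (skew_apply hA1)

-- assembled orthogonality for Vs
lemma vs_ad2 {d : ℕ} : ∀ A ∈ Vs d, ∀ B ∈ Ad2 d, ip A B = 0 :=
  orth_sup_left (orth_sup_left dd2_ad2 sd2_ad2) ad1_ad2

lemma vs_sd3 {d : ℕ} : ∀ A ∈ Vs d, ∀ B ∈ Sd3 d, ip A B = 0 :=
  orth_sup_left (orth_sup_left dd2_sd3 sd2_sd3) ad1_sd3

lemma vt_vs {d : ℕ} : ∀ A ∈ Vt d, ∀ B ∈ Vs d, ip A B = 0 :=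
  orth_sup_right (orth_sup_right vt_dd2 vt_sd2) vt_ad1

lemma conj_dd2 {d : ℕ} (σ : Equiv.Perm (Fin d)) :
    ∀ A ∈ Dd2 d, permMat σ * A * (permMat σ)ᵀ ∈ Dd2 d := by
  rintro A ⟨h1, h2⟩
  refine ⟨fun i j hij => ?_, ?_⟩
  · rw [conj_apply]
    exact h1 _ _ ((Equiv.injective σ⁻¹).ne hij)
  · simp only [conj_apply]
    rw [Equiv.sum_comp σ⁻¹ (fun i => A i i)]
    exact h2

lemma conj_sd2 {d : ℕ} (σ : Equiv.Perm (Fin d)) :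
    ∀ A ∈ Sd2 d, permMat σ * A * (permMat σ)ᵀ ∈ Sd2 d := by
  rintro A ⟨x, hx0, hxd, hx⟩
  refine ⟨fun i => x (σ⁻¹ i), ?_, fun i => ?_, fun i j hij => ?_⟩
  · rw [Equiv.sum_comp σ⁻¹ x]; exact hx0
  · rw [conj_apply]; exact hxd _
  · rw [conj_apply]; exact hx _ _ ((Equiv.injective σ⁻¹).ne hij)

lemma conj_ad1 {d : ℕ} (σ : Equiv.Perm (Fin d)) :
    ∀ A ∈ Ad1 d, permMat σ * A * (permMat σ)ᵀ ∈ Ad1 d := by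
  rintro A ⟨x, hx⟩
  exact ⟨fun i => x (σ⁻¹ i), fun i j => by rw [conj_apply]; exact hx _ _⟩

lemma conj_ad2 {d : ℕ} (σ : Equiv.Perm (Fin d)) :
    ∀ A ∈ Ad2 d, permMat σ * A * (permMat σ)ᵀ ∈ Ad2 d := by
  rintro A ⟨h1, h2⟩
  constructor
  · ext i j
    rw [Matrix.transpose_apply, conj_apply, Matrix.neg_apply, conj_apply]
    exact skew_apply h1 _ _
  · intro i
    simp only [conj_apply]
    rw [Equiv.sum_comp σ⁻¹ (fun j => A (σ⁻¹ i) j)]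
    exact h2 _

lemma conj_sd3 {d : ℕ} (σ : Equiv.Perm (Fin d)) :
    ∀ A ∈ Sd3 d, permMat σ * A * (permMat σ)ᵀ ∈ Sd3 d := by
  rintro A ⟨h1, h2, h3⟩
  refine ⟨?_, fun i => ?_, fun i => ?_⟩
  · ext i j
    rw [Matrix.transpose_apply, conj_apply, conj_apply]
    exact symm_apply h1 _ _
  · rw [conj_apply]; exact h2 _
  · simp only [conj_apply]
    rw [Equiv.sum_comp σ⁻¹ (fun j => A (σ⁻¹ i) j)]
    exact h3 _

lemma conj_vt {d : ℕ} (σ : Equiv.Perm (Fin d)) :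
    ∀ A ∈ Vt d, permMat σ * A * (permMat σ)ᵀ ∈ Vt d := by
  intro A hA
  obtain ⟨a, b, rfl⟩ := Submodule.mem_span_pair.mp hA
  have : permMat σ * (a • 1 + b • (Jmat d - 1)) * (permMat σ)ᵀ
      = a • 1 + b • (Jmat d - 1) := by
    ext i j
    rw [conj_apply]
    simp only [Matrix.add_apply, Matrix.smul_apply, Matrix.sub_apply, Matrix.one_apply,
      Jmat, Matrix.of_apply, smul_eq_mul, EmbeddingLike.apply_eq_iff_eq]
  rw [this]
  exact Submodule.mem_span_pair.mpr ⟨a, b, rfl⟩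

lemma conj_vs {d : ℕ} (σ : Equiv.Perm (Fin d)) :
    ∀ A ∈ Vs d, permMat σ * A * (permMat σ)ᵀ ∈ Vs d := by
  intro A hA
  obtain ⟨B, hB, C, hC, rfl⟩ := Submodule.mem_sup.mp hA
  obtain ⟨D, hD, S, hS, rfl⟩ := Submodule.mem_sup.mp hB
  have hexp : permMat σ * (D + S + C) * (permMat σ)ᵀ
      = permMat σ * D * (permMat σ)ᵀ + permMat σ * S * (permMat σ)ᵀ
        + permMat σ * C * (permMat σ)ᵀ := by
    rw [mul_add, mul_add, add_mul, add_mul]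
  rw [hexp]
  refine Submodule.add_mem _ (Submodule.add_mem _ ?_ ?_) ?_
  · exact Submodule.mem_sup_left (Submodule.mem_sup_left (conj_dd2 σ D hD))
  · exact Submodule.mem_sup_left (Submodule.mem_sup_right (conj_sd2 σ S hS))
  · exact Submodule.mem_sup_right (conj_ad1 σ C hC)

lemma span_top {d : ℕ} (hd : 4 ≤ d) :
    Vt d ⊔ Vs d ⊔ Ad2 d ⊔ Sd3 d = (⊤ : Submodule ℝ (Matrix (Fin d) (Fin d) ℝ)) := by
  have hd' : (4:ℝ) ≤ (d:ℝ) := by exact_mod_cast hd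
  have hd1 : (d:ℝ) ≠ 0 := by linarith
  have hd2 : (d:ℝ) - 1 ≠ 0 := by linarith
  have hd3 : (d:ℝ) - 2 ≠ 0 := by linarith
  rw [Submodule.eq_top_iff']
  intro A
  set K : Matrix (Fin d) (Fin d) ℝ := Matrix.of fun i j => (A i j - A j i)/2 with hK
  set S : Matrix (Fin d) (Fin d) ℝ := Matrix.of fun i j => (A i j + A j i)/2 with hS
  set y : Fin d → ℝ := fun i => (∑ j, K i j)/d with hy
  set t : ℝ := (∑ i, A i i)/d with ht
  set r : Fin d → ℝ := fun i => (∑ j, S i j) - S i i with hr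
  set c : ℝ := (∑ i, r i)/((d:ℝ)*((d:ℝ)-1)) with hc
  set x : Fin d → ℝ := fun i => (r i - c*((d:ℝ)-1))/((d:ℝ)-2) with hx
  -- total sum of K is zero
  have htotK : ∑ i, ∑ j, K i j = 0 := by
    have h1 : ∑ i, ∑ j, K i j = ((∑ i, ∑ j, A i j) - (∑ i, ∑ j, A j i))/2 := by
      rw [hK]
      simp only [Matrix.of_apply, sub_div, Finset.sum_sub_distrib, Finset.sum_div]
    rw [h1, Finset.sum_comm (f := fun i j => A j i)]
    simp
  have hysum : ∑ i, y i = 0 := by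
    rw [hy, ← Finset.sum_div, htotK, zero_div]
  have hKrow : ∀ i, ∑ j, K i j = (d:ℝ) * y i := by
    intro i; rw [hy]; field_simp
  have hcsum : (d:ℝ) * (c * ((d:ℝ)-1)) = ∑ i, r i := by
    rw [hc]; field_simp
  have hxsum : ∑ i, x i = 0 := by
    rw [hx, ← Finset.sum_div]
    rw [Finset.sum_sub_distrib, Finset.sum_const, Finset.card_univ, Fintype.card_fin]
    rw [nsmul_eq_mul, hcsum]
    simp
  have hxi : ∀ i, ((d:ℝ)-2) * x i = r i - c*((d:ℝ)-1) := by
    intro i; rw [hx]; field_simp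
  have htA : (d:ℝ) * t = ∑ i, A i i := by rw [ht]; field_simp
  -- membership pieces
  have hmemT : t • (1 : Matrix (Fin d) (Fin d) ℝ) + c • (Jmat d - 1) ∈ Vt d :=
    Submodule.mem_span_pair.mpr ⟨t, c, rfl⟩
  have hmemD : (Matrix.of fun i j => if i = j then A i i - t else 0) ∈ Dd2 d := by
    refine ⟨fun i j hij => by simp [Matrix.of_apply, hij], ?_⟩
    simp only [Matrix.of_apply, eq_self_iff_true, if_true]
    rw [Finset.sum_sub_distrib, Finset.sum_const, Finset.card_univ, Fintype.card_fin,
      nsmul_eq_mul, htA]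
    ring
  have hmemS2 : (Matrix.of fun i j => if i = j then 0 else x i + x j) ∈ Sd2 d := by
    exact ⟨x, hxsum, fun i => by simp, fun i j hij => by simp [Matrix.of_apply, hij]⟩
  have hmemA1 : (Matrix.of fun i j => y i - y j) ∈ Ad1 d := ⟨y, fun i j => rfl⟩
  have hmemK2 : (Matrix.of fun i j => K i j - (y i - y j)) ∈ Ad2 d := by
    constructor
    · ext i j
      simp only [Matrix.transpose_apply, Matrix.neg_apply, Matrix.of_apply, hK]
      ring
    · intro i
      simp only [Matrix.of_apply]
      rw [Finset.sum_sub_distrib, hKrow i, Finset.sum_sub_distrib, Finset.sum_const,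
        Finset.card_univ, Fintype.card_fin, nsmul_eq_mul, hysum]
      ring
  have hmemN : (Matrix.of fun i j => if i = j then 0 else S i j - c - x i - x j) ∈ Sd3 d := by
    refine ⟨?_, fun i => by simp, fun i => ?_⟩
    · ext i j
      simp only [Matrix.transpose_apply, Matrix.of_apply]
      by_cases h : i = j
      · simp [h]
      · rw [if_neg (Ne.symm h), if_neg h, hS]
        simp only [Matrix.of_apply]
        ring
    · simp only [Matrix.of_apply]
      rw [sum_ite_ne i (fun j => S i j - c - x i - x j)]
      have hSrow : ∑ j, S i j = r i + S i i := by rw [hr]; ring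
      rw [Finset.sum_sub_distrib, Finset.sum_sub_distrib, Finset.sum_sub_distrib]
      rw [hSrow, Finset.sum_const, Finset.sum_const, Finset.card_univ, Fintype.card_fin,
        nsmul_eq_mul, nsmul_eq_mul, hxsum]
      have h1 := hxi i
      ring_nf
      ring_nf at h1 ⊢
      linarith
  -- the decomposition
  have hsum : A = (t • (1 : Matrix (Fin d) (Fin d) ℝ) + c • (Jmat d - 1))
      + ((Matrix.of fun i j => if i = j then A i i - t else 0)
        + (Matrix.of fun i j => if i = j then 0 else x i + x j)
        + (Matrix.of fun i j => y i - y j))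
      + (Matrix.of fun i j => K i j - (y i - y j))
      + (Matrix.of fun i j => if i = j then 0 else S i j - c - x i - x j) := by
    ext i j
    simp only [Matrix.add_apply, Matrix.smul_apply, Matrix.sub_apply, Matrix.one_apply,
      Jmat, Matrix.of_apply, smul_eq_mul, hK, hS]
    by_cases h : i = j
    · subst h
      simp only [eq_self_iff_true, if_true]
      ring
    · simp only [if_neg h]
      ring
  rw [hsum]
  refine Submodule.add_mem _ (Submodule.add_mem _ (Submodule.add_mem _ ?_ ?_) ?_) ?_
  · exact Submodule.mem_sup_left (Submodule.mem_sup_left (Submodule.mem_sup_left hmemT))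
  · refine Submodule.mem_sup_left (Submodule.mem_sup_left (Submodule.mem_sup_right ?_))
    refine Submodule.add_mem _ (Submodule.add_mem _ ?_ ?_) ?_
    · exact Submodule.mem_sup_left (Submodule.mem_sup_left hmemD)
    · exact Submodule.mem_sup_left (Submodule.mem_sup_right hmemS2)
    · exact Submodule.mem_sup_right hmemA1
  · exact Submodule.mem_sup_left (Submodule.mem_sup_right hmemK2)
  · exact Submodule.mem_sup_right hmemN

lemma finrank_le_of_entries {d : ℕ} {ι : Type} [Fintype ι]
    (V : Submodule ℝ (Matrix (Fin d) (Fin d) ℝ)) (π : ι → Fin d × Fin d)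
    (h : ∀ A ∈ V, (∀ k : ι, A (π k).1 (π k).2 = 0) → A = 0) :
    Module.finrank ℝ V ≤ Fintype.card ι := by
  let f : V →ₗ[ℝ] (ι → ℝ) :=
    { toFun := fun A k => (A : Matrix (Fin d) (Fin d) ℝ) (π k).1 (π k).2
      map_add' := fun a b => by funext k; simp
      map_smul' := fun c a => by funext k; simp }
  have hinj : Function.Injective f := by
    refine (injective_iff_map_eq_zero f).mpr fun a ha => ?_
    have : (a : Matrix (Fin d) (Fin d) ℝ) = 0 :=
      h a a.2 fun k => congrFun ha k
    exact Subtype.ext this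
  calc Module.finrank ℝ V ≤ Module.finrank ℝ (ι → ℝ) :=
        LinearMap.finrank_le_finrank_of_injective hinj
    _ = Fintype.card ι := Module.finrank_pi ℝ

def pairSigmaEquiv (n : ℕ) : {p : Fin n × Fin n // p.1 < p.2} ≃ Σ j : Fin n, Fin j.val where
  toFun q := ⟨q.1.2, ⟨q.1.1.val, q.2⟩⟩
  invFun s := ⟨(⟨s.2.val, lt_trans s.2.isLt s.1.isLt⟩, s.1), s.2.isLt⟩
  left_inv q := by
    ext <;> simp
  right_inv s := by
    ext <;> simp

lemma card_lt_pairs (n : ℕ) :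
    Fintype.card {p : Fin n × Fin n // p.1 < p.2} = n*(n-1)/2 := by
  rw [Fintype.card_congr (pairSigmaEquiv n), Fintype.card_sigma]
  simp only [Fintype.card_fin]
  rw [Fin.sum_univ_eq_sum_range (fun i => i) n]
  have := Finset.sum_range_id_mul_two n
  omega

lemma sum_exception2 {d : ℕ} (f : Fin d → ℝ) (i k : Fin d) (hik : i ≠ k)
    (h : ∀ j, j ≠ i → j ≠ k → f j = 0) : ∑ j, f j = f i + f k :=
  Finset.sum_eq_add_of_mem i k (Finset.mem_univ i) (Finset.mem_univ k) hik
    (fun c _ hc => h c hc.1 hc.2)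

lemma sum_exception1 {d : ℕ} (f : Fin d → ℝ) (i : Fin d)
    (h : ∀ j, j ≠ i → f j = 0) : ∑ j, f j = f i := by
  have := sum_exception f (fun _ => 0) i h
  simpa using this

def emb {d : ℕ} (i : Fin (d-1)) : Fin d := ⟨i.val + 1, by have := i.isLt; omega⟩

lemma emb_cover {d : ℕ} (a : Fin d) (ha : a.val ≠ 0) :
    ∃ i : Fin (d-1), emb i = a :=
  ⟨⟨a.val - 1, by have := a.isLt; omega⟩, Fin.ext (by simp [emb]; omega)⟩

lemma emb_ne {d : ℕ} (hd : 4 ≤ d) (i : Fin (d-1)) : emb i ≠ (⟨0, by omega⟩ : Fin d) := by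
  intro h
  have := congrArg Fin.val h
  simp [emb] at this

lemma vt_dim_le {d : ℕ} (hd : 4 ≤ d) : Module.finrank ℝ (Vt d) ≤ 2 := by
  have h := finrank_le_of_entries (Vt d)
    (![((⟨0, by omega⟩ : Fin d), (⟨0, by omega⟩ : Fin d)),
       ((⟨0, by omega⟩ : Fin d), (⟨1, by omega⟩ : Fin d))] : Fin 2 → Fin d × Fin d) ?_
  · simpa using h
  intro A hA hz
  obtain ⟨a, b, rfl⟩ := Submodule.mem_span_pair.mp hA
  have h0 := hz 0
  have h1 := hz 1
  simp only [Matrix.cons_val_zero, Matrix.cons_val_one, Matrix.head_cons,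
    Matrix.add_apply, Matrix.smul_apply, Matrix.sub_apply, Matrix.one_apply, Jmat,
    Matrix.of_apply, smul_eq_mul] at h0 h1
  have hne : (⟨0, by omega⟩ : Fin d) ≠ (⟨1, by omega⟩ : Fin d) := by
    intro h; have := congrArg Fin.val h; simp at this
  rw [if_neg hne] at h1
  simp at h0 h1
  rw [h0, h1]
  simp

lemma ad2_dim_le {d : ℕ} (hd : 4 ≤ d) :
    Module.finrank ℝ (Ad2 d) ≤ (d-1)*(d-2)/2 := by
  have h := finrank_le_of_entries (Ad2 d)
    (fun q : {p : Fin (d-1) × Fin (d-1) // p.1 < p.2} => (emb q.1.1, emb q.1.2)) ?_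
  · rw [card_lt_pairs] at h
    rwa [show d-1-1 = d-2 from by omega] at h
  rintro A ⟨h1, h2⟩ hz
  have hsk := skew_apply h1
  set f0 : Fin d := ⟨0, by omega⟩ with hf0
  have z0 : ∀ a b : Fin d, a.val ≠ 0 → b.val ≠ 0 → A a b = 0 := by
    intro a b ha hb
    rcases lt_trichotomy a.val b.val with hlt | heq | hgt
    · obtain ⟨ia, hia⟩ := emb_cover a ha
      obtain ⟨ib, hib⟩ := emb_cover b hb
      have hq : ia < ib := by
        have va := congrArg Fin.val hia
        have vb := congrArg Fin.val hib
        simp [emb] at va vb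
        exact Fin.lt_def.mpr (by omega)
      have := hz ⟨(ia, ib), hq⟩
      dsimp only at this
      rwa [hia, hib] at this
    · have : a = b := Fin.ext heq
      subst this
      exact skew_diag h1 a
    · obtain ⟨ia, hia⟩ := emb_cover a ha
      obtain ⟨ib, hib⟩ := emb_cover b hb
      have hq : ib < ia := by
        have va := congrArg Fin.val hia
        have vb := congrArg Fin.val hib
        simp [emb] at va vb
        exact Fin.lt_def.mpr (by omega)
      have h0 := hz ⟨(ib, ia), hq⟩
      dsimp only at h0
      rw [hib, hia] at h0
      rw [hsk b a, h0, neg_zero]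
  have hrow : ∀ a : Fin d, a.val ≠ 0 → A a f0 = 0 := by
    intro a ha
    have := sum_exception1 (A a) f0 (fun j hj => z0 a j ha
      (fun hv => hj (Fin.ext (by simp [hf0, hv]))))
    rw [h2 a] at this
    linarith
  ext a b
  simp only [Matrix.zero_apply]
  by_cases ha : a.val = 0
  · by_cases hb : b.val = 0
    · have : a = b := Fin.ext (by omega)
      subst this; exact skew_diag h1 a
    · have haf : a = f0 := Fin.ext (by simp [hf0, ha])
      subst haf
      rw [hsk b f0, hrow b hb, neg_zero]
  · by_cases hb : b.val = 0
    · have hbf : b = f0 := Fin.ext (by simp [hf0, hb])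
      subst hbf
      exact hrow a ha
    · exact z0 a b ha hb

lemma vs_dim_le {d : ℕ} (hd : 4 ≤ d) : Module.finrank ℝ (Vs d) ≤ 3*(d-1) := by
  have hd' : (4:ℝ) ≤ (d:ℝ) := by exact_mod_cast hd
  have h := finrank_le_of_entries (Vs d)
    (fun p : Fin 3 × Fin (d-1) =>
      (![fun i => ((emb i : Fin d), (emb i : Fin d)),
         fun i => ((emb i : Fin d), (⟨0, by omega⟩ : Fin d)),
         fun i => ((⟨0, by omega⟩ : Fin d), (emb i : Fin d))] p.1) p.2) ?_
  · simpa using h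
  intro A hA hz
  set f0 : Fin d := ⟨0, by omega⟩ with hf0
  obtain ⟨B, hB, Y, hY, rfl⟩ := Submodule.mem_sup.mp hA
  obtain ⟨D, hDm, S, hSm, rfl⟩ := Submodule.mem_sup.mp hB
  obtain ⟨hD1, hD2⟩ := hDm
  obtain ⟨x, hx0, hxd, hx⟩ := hSm
  obtain ⟨y, hy⟩ := hY
  set u : Fin d → ℝ := fun a => x a + y a with hu
  set v : Fin d → ℝ := fun a => x a - y a with hv
  have hoff : ∀ a b : Fin d, a ≠ b → (D + S + Y) a b = u a + v b := by
    intro a b hab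
    simp only [Matrix.add_apply, hD1 a b hab, hx a b hab, hy a b, hu, hv]
    ring
  have hdiag : ∀ a : Fin d, (D + S + Y) a a = D a a := by
    intro a
    simp only [Matrix.add_apply, hxd a, hy a a]
    ring
  have hembne : ∀ i : Fin (d-1), (emb i : Fin d) ≠ f0 := by
    intro i hcon
    have := congrArg Fin.val hcon
    simp [emb, hf0] at this
  have e1 : ∀ i : Fin (d-1), u (emb i) + v f0 = 0 := by
    intro i
    have := hz (1, i)
    simp only [Matrix.cons_val_one, Matrix.cons_val_zero, Matrix.head_cons] at this
    rwa [hoff _ _ (hembne i)] at this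
  have e2 : ∀ i : Fin (d-1), u f0 + v (emb i) = 0 := by
    intro i
    have := hz (2, i)
    simp only [Matrix.cons_val_two, Matrix.tail_cons, Matrix.head_cons] at this
    rwa [hoff _ _ (Ne.symm (hembne i))] at this
  have e3 : ∀ i : Fin (d-1), D (emb i) (emb i) = 0 := by
    intro i
    have := hz (0, i)
    simp only [Matrix.cons_val_zero] at this
    rwa [hdiag] at this
  have hu' : ∀ a : Fin d, a ≠ f0 → u a = -v f0 := by
    intro a ha
    obtain ⟨i, hi⟩ := emb_cover a (fun hval => ha (Fin.ext (by simp [hf0, hval])))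
    have := e1 i; rw [hi] at this; linarith
  have hv' : ∀ a : Fin d, a ≠ f0 → v a = -u f0 := by
    intro a ha
    obtain ⟨i, hi⟩ := emb_cover a (fun hval => ha (Fin.ext (by simp [hf0, hval])))
    have := e2 i; rw [hi] at this; linarith
  -- pin down s := u f0 + v f0 using ∑ x = 0
  have hxuv : ∀ a, x a = (u a + v a)/2 := by intro a; rw [hu, hv]; ring
  have hsx : ∑ a, x a = ((d:ℝ) * (-(u f0 + v f0)/2) - (-(u f0 + v f0)/2)) + x f0 := by
    rw [show ∑ a, x a = ((∑ _a : Fin d, (-(u f0 + v f0)/2)) - (-(u f0 + v f0)/2)) + x f0 from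
      sum_exception x (fun _ => -(u f0 + v f0)/2) f0 (fun a ha => by
        rw [hxuv a, hu' a ha, hv' a ha]; ring)]
    rw [Finset.sum_const, Finset.card_univ, Fintype.card_fin, nsmul_eq_mul]
  have hs0 : u f0 + v f0 = 0 := by
    rw [hx0] at hsx
    have hxf0 : x f0 = (u f0 + v f0)/2 := hxuv f0
    rw [hxf0] at hsx
    have : ((d:ℝ) - 2) * (u f0 + v f0) = 0 := by ring_nf at hsx ⊢; linarith
    have hne2 : (d:ℝ) - 2 ≠ 0 := by linarith
    exact (mul_eq_zero.mp this).resolve_left hne2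
  -- diagonal at f0
  have hDf0 : D f0 f0 = 0 := by
    have := sum_exception1 (fun a => D a a) f0 (fun a ha => by
      obtain ⟨i, hi⟩ := emb_cover a (fun hval => ha (Fin.ext (by simp [hf0, hval])))
      rw [← hi]; exact e3 i)
    rw [hD2] at this
    linarith
  ext a b
  simp only [Matrix.zero_apply]
  by_cases hab : a = b
  · subst hab
    rw [hdiag a]
    by_cases ha : a = f0
    · rw [ha]; exact hDf0
    · obtain ⟨i, hi⟩ := emb_cover a (fun hval => ha (Fin.ext (by simp [hf0, hval])))
      rw [← hi]; exact e3 i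
  · rw [hoff a b hab]
    by_cases ha : a = f0
    · have hbne : b ≠ f0 := fun h => hab (ha.trans h.symm)
      rw [ha, hv' b hbne]
      ring
    · by_cases hb : b = f0
      · subst hb
        rw [hu' a ha]; ring
      · rw [hu' a ha, hv' b hb]
        linarith [hs0]

lemma sd3_dim_le {d : ℕ} (hd : 4 ≤ d) : Module.finrank ℝ (Sd3 d) ≤ d*(d-3)/2 := by
  have h01 : (0 : ℕ) < d - 1 := by omega
  have h11 : (1 : ℕ) < d - 1 := by omega
  set q01 : {p : Fin (d-1) × Fin (d-1) // p.1 < p.2} :=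
    ⟨(⟨0, h01⟩, ⟨1, h11⟩), by simp [Fin.lt_def]⟩ with hq01
  have h := finrank_le_of_entries (Sd3 d)
    (fun q : {q : {p : Fin (d-1) × Fin (d-1) // p.1 < p.2} // q ≠ q01} =>
      ((emb q.1.1.1 : Fin d), (emb q.1.1.2 : Fin d))) ?_
  · have hcard : Fintype.card {q : {p : Fin (d-1) × Fin (d-1) // p.1 < p.2} // q ≠ q01}
        = (d-1)*(d-2)/2 - 1 := by
      rw [Fintype.card_subtype_compl, Fintype.card_subtype_eq, card_lt_pairs,
        show d-1-1 = d-2 from by omega]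
    rw [hcard] at h
    refine h.trans (le_of_eq ?_)
    obtain ⟨k, hk⟩ : ∃ k, (d-2)*(d-2+1) = k + k := (Nat.even_mul_succ_self (d-2))
    rw [show d-2+1 = d-1 from by omega, mul_comm] at hk
    have h2 : d*(d-3) + 2 = (d-1)*(d-2) := by
      obtain ⟨m, rfl⟩ : ∃ m, d = m + 4 := ⟨d - 4, by omega⟩
      rw [show m+4-1 = m+3 from by omega, show m+4-2 = m+2 from by omega,
        show m+4-3 = m+1 from by omega]
      ring
    omega
  rintro A ⟨h1, h2, h3⟩ hz
  have hsym := symm_apply h1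
  set f0 : Fin d := ⟨0, by omega⟩ with hf0
  set f1 : Fin d := ⟨1, by omega⟩ with hf1
  set f2 : Fin d := ⟨2, by omega⟩ with hf2
  have vf0 : (f0 : ℕ) = 0 := rfl
  have vf1 : (f1 : ℕ) = 1 := rfl
  have vf2 : (f2 : ℕ) = 2 := rfl
  have z1 : ∀ a b : Fin d, a.val ≠ 0 → a.val < b.val → ¬(a.val = 1 ∧ b.val = 2) →
      A a b = 0 := by
    intro a b ha hab hne12
    obtain ⟨ia, hia⟩ := emb_cover a ha
    obtain ⟨ib, hib⟩ := emb_cover b (by omega)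
    have va := congrArg Fin.val hia
    have vb := congrArg Fin.val hib
    simp only [emb] at va vb
    have hlt : ia < ib := Fin.lt_def.mpr (by omega)
    have hne : (⟨(ia, ib), hlt⟩ : {p : Fin (d-1) × Fin (d-1) // p.1 < p.2}) ≠ q01 := by
      intro hcon
      have hv := congrArg (fun z => (((z.1.1 : Fin (d-1)) : ℕ), ((z.1.2 : Fin (d-1)) : ℕ))) hcon
      simp only [hq01, Prod.mk.injEq] at hv
      omega
    have := hz ⟨⟨(ia, ib), hlt⟩, hne⟩
    dsimp only at this
    rwa [hia, hib] at this
  have z2 : ∀ a b : Fin d, a.val ≠ 0 → b.val ≠ 0 → a ≠ b →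
      ¬(a.val = 1 ∧ b.val = 2) → ¬(a.val = 2 ∧ b.val = 1) → A a b = 0 := by
    intro a b ha hb hab c1 c2
    rcases lt_trichotomy a.val b.val with hlt | heq | hgt
    · exact z1 a b ha hlt c1
    · exact absurd (Fin.ext heq) hab
    · rw [hsym b a]
      exact z1 b a hb hgt (fun hh => c2 ⟨hh.2, hh.1⟩)
  have hrow3 : ∀ a : Fin d, 3 ≤ a.val → A a f0 = 0 := by
    intro a ha
    have := sum_exception1 (A a) f0 (fun j hj => by
      have hjv : (j : ℕ) ≠ 0 := fun hv => hj (Fin.ext (by omega))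
      by_cases hja : j = a
      · rw [hja]; exact h2 a
      · exact z2 a j (by omega) hjv (Ne.symm hja) (by omega) (by omega))
    rw [h3 a] at this
    linarith
  have hcol3 : ∀ a : Fin d, 3 ≤ a.val → A f0 a = 0 := by
    intro a ha
    rw [hsym a f0]
    exact hrow3 a ha
  have hne02 : f0 ≠ f2 := fun h => by
    have := congrArg Fin.val h; omega
  have hne01 : f0 ≠ f1 := fun h => by
    have := congrArg Fin.val h; omega
  have hne12' : f1 ≠ f2 := fun h => by
    have := congrArg Fin.val h; omega
  have row1 : A f1 f0 + A f1 f2 = 0 := by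
    have := sum_exception2 (A f1) f0 f2 hne02 (fun j hj0 hj2 => by
      have hjv0 : (j : ℕ) ≠ 0 := fun hv => hj0 (Fin.ext (by omega))
      have hjv2 : (j : ℕ) ≠ 2 := fun hv => hj2 (Fin.ext (by omega))
      by_cases hj1 : (j : ℕ) = 1
      · rw [show j = f1 from Fin.ext (by omega)]
        exact h2 f1
      · exact z1 f1 j (by omega) (by omega) (by omega))
    rw [h3 f1] at this
    linarith
  have row2 : A f2 f0 + A f2 f1 = 0 := by
    have := sum_exception2 (A f2) f0 f1 hne01 (fun j hj0 hj1 => by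
      have hjv0 : (j : ℕ) ≠ 0 := fun hv => hj0 (Fin.ext (by omega))
      have hjv1 : (j : ℕ) ≠ 1 := fun hv => hj1 (Fin.ext (by omega))
      by_cases hj2 : (j : ℕ) = 2
      · rw [show j = f2 from Fin.ext (by omega)]
        exact h2 f2
      · exact z2 f2 j (by omega) hjv0 (fun h => by
          have := congrArg Fin.val h; omega) (by omega) (by omega))
    rw [h3 f2] at this
    linarith
  have row0 : A f0 f1 + A f0 f2 = 0 := by
    have := sum_exception2 (A f0) f1 f2 hne12' (fun j hj1 hj2 => by
      have hjv1 : (j : ℕ) ≠ 1 := fun hv => hj1 (Fin.ext (by omega))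
      have hjv2 : (j : ℕ) ≠ 2 := fun hv => hj2 (Fin.ext (by omega))
      by_cases hj0 : (j : ℕ) = 0
      · rw [show j = f0 from Fin.ext (by omega)]
        exact h2 f0
      · exact hcol3 j (by omega))
    rw [h3 f0] at this
    linarith
  have hsym10 : A f0 f1 = A f1 f0 := hsym f1 f0
  have hsym20 : A f0 f2 = A f2 f0 := hsym f2 f0
  have hsym21 : A f2 f1 = A f1 f2 := hsym f1 f2
  have hp : A f1 f0 = 0 := by linarith
  have hq : A f2 f0 = 0 := by linarith
  have hs : A f1 f2 = 0 := by linarith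
  ext a b
  simp only [Matrix.zero_apply]
  by_cases hab : a = b
  · rw [hab]; exact h2 b
  by_cases ha0 : (a : ℕ) = 0
  · have haf : a = f0 := Fin.ext (by omega)
    have hb0 : (b : ℕ) ≠ 0 := fun hv => hab (Fin.ext (by omega))
    by_cases hb1 : (b : ℕ) = 1
    · rw [haf, show b = f1 from Fin.ext (by omega), hsym10]; exact hp
    · by_cases hb2 : (b : ℕ) = 2
      · rw [haf, show b = f2 from Fin.ext (by omega), hsym20]; exact hq
      · rw [haf]; exact hcol3 b (by omega)
  by_cases hb0 : (b : ℕ) = 0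
  · have hbf : b = f0 := Fin.ext (by omega)
    by_cases ha1 : (a : ℕ) = 1
    · rw [hbf, show a = f1 from Fin.ext (by omega)]; exact hp
    · by_cases ha2 : (a : ℕ) = 2
      · rw [hbf, show a = f2 from Fin.ext (by omega)]; exact hq
      · rw [hbf]; exact hrow3 a (by omega)
  by_cases hc1 : (a : ℕ) = 1 ∧ (b : ℕ) = 2
  · rw [show a = f1 from Fin.ext (by omega), show b = f2 from Fin.ext (by omega)]
    exact hs
  by_cases hc2 : (a : ℕ) = 2 ∧ (b : ℕ) = 1
  · rw [show a = f2 from Fin.ext (by omega), show b = f1 from Fin.ext (by omega)]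
    rw [hsym21]
    exact hs
  exact z2 a b ha0 hb0 hab hc1 hc2

lemma finranks_eq {d : ℕ} (hd : 4 ≤ d) :
    Module.finrank ℝ (Vt d) = 2 ∧ Module.finrank ℝ (Vs d) = 3*(d-1) ∧
    Module.finrank ℝ (Ad2 d) = (d-1)*(d-2)/2 ∧ Module.finrank ℝ (Sd3 d) = d*(d-3)/2 := by
  have b1 := vt_dim_le hd
  have b2 := vs_dim_le hd
  have b3 := ad2_dim_le hd
  have b4 := sd3_dim_le hd
  have hd1 : Vt d ⊓ Vs d = ⊥ := inf_eq_bot_of_orth vt_vs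
  have hd2 : (Vt d ⊔ Vs d) ⊓ Ad2 d = ⊥ :=
    inf_eq_bot_of_orth (orth_sup_left vt_ad2 vs_ad2)
  have hd3 : (Vt d ⊔ Vs d ⊔ Ad2 d) ⊓ Sd3 d = ⊥ :=
    inf_eq_bot_of_orth (orth_sup_left (orth_sup_left vt_sd3 vs_sd3) ad2_sd3)
  have r1 := Submodule.finrank_sup_add_finrank_inf_eq (Vt d) (Vs d)
  rw [hd1, finrank_bot] at r1
  have r2 := Submodule.finrank_sup_add_finrank_inf_eq (Vt d ⊔ Vs d) (Ad2 d)
  rw [hd2, finrank_bot] at r2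
  have r3 := Submodule.finrank_sup_add_finrank_inf_eq (Vt d ⊔ Vs d ⊔ Ad2 d) (Sd3 d)
  rw [hd3, finrank_bot] at r3
  have htop : Module.finrank ℝ ↥(Vt d ⊔ Vs d ⊔ Ad2 d ⊔ Sd3 d) = d*d := by
    rw [span_top hd, finrank_top, Module.finrank_matrix]
    simp
  obtain ⟨m, rfl⟩ : ∃ m, d = m + 4 := ⟨d - 4, by omega⟩
  obtain ⟨s, hs⟩ : ∃ s, m*m = s := ⟨_, rfl⟩
  have e1 : (m+4-1)*(m+4-2) = s + 5*m + 6 := by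
    rw [show m+4-1 = m+3 from by omega, show m+4-2 = m+2 from by omega, ← hs]; ring
  have e2 : (m+4)*(m+4-3) = s + 5*m + 4 := by
    rw [show m+4-3 = m+1 from by omega, ← hs]; ring
  have e3 : (m+4)*(m+4) = s + 8*m + 16 := by rw [← hs]; ring
  have hpar : ∃ k, s + 5*m = 2*k := by
    rcases Nat.even_or_odd m with ⟨t, ht⟩ | ⟨t, ht⟩
    · exact ⟨2*t*t+5*t, by rw [← hs, ht]; ring⟩
    · exact ⟨(2*t+1)*(t+3), by rw [← hs, ht]; ring⟩
  obtain ⟨k, hk⟩ := hpar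
  rw [e1] at b3
  rw [e2] at b4
  rw [e3] at htop
  refine ⟨?_, ?_, ?_, ?_⟩
  · omega
  · omega
  · rw [e1]; omega
  · rw [e2]; omega


/-- for `d ≥ 4`, `M(d,d)` is the orthogonal (Frobenius) direct sum of the
four `S_d`-invariant isotypic components `V_t`, `V_s`, `V_x = 𝔸_{d,2}`, `V_y = 𝕊_{d,3}`
of dimensions `2`, `3(d−1)`, `(d−1)(d−2)/2` and `d(d−3)/2` respectively. -/
theorem isotypic_decomposition (d : ℕ) (hd : 4 ≤ d) :
    Vt d ⊔ Vs d ⊔ Ad2 d ⊔ Sd3 d = (⊤ : Submodule ℝ (Matrix (Fin d) (Fin d) ℝ)) ∧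
    (∀ A ∈ Vt d, ∀ B ∈ Vs d, Matrix.trace (Aᵀ * B) = 0) ∧
    (∀ A ∈ Vt d, ∀ B ∈ Ad2 d, Matrix.trace (Aᵀ * B) = 0) ∧
    (∀ A ∈ Vt d, ∀ B ∈ Sd3 d, Matrix.trace (Aᵀ * B) = 0) ∧
    (∀ A ∈ Vs d, ∀ B ∈ Ad2 d, Matrix.trace (Aᵀ * B) = 0) ∧
    (∀ A ∈ Vs d, ∀ B ∈ Sd3 d, Matrix.trace (Aᵀ * B) = 0) ∧
    (∀ A ∈ Ad2 d, ∀ B ∈ Sd3 d, Matrix.trace (Aᵀ * B) = 0) ∧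
    (∀ σ : Equiv.Perm (Fin d), ∀ A ∈ Vt d, permMat σ * A * (permMat σ)ᵀ ∈ Vt d) ∧
    (∀ σ : Equiv.Perm (Fin d), ∀ A ∈ Vs d, permMat σ * A * (permMat σ)ᵀ ∈ Vs d) ∧
    (∀ σ : Equiv.Perm (Fin d), ∀ A ∈ Ad2 d, permMat σ * A * (permMat σ)ᵀ ∈ Ad2 d) ∧
    (∀ σ : Equiv.Perm (Fin d), ∀ A ∈ Sd3 d, permMat σ * A * (permMat σ)ᵀ ∈ Sd3 d) ∧
    Module.finrank ℝ (Vt d) = 2 ∧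
    Module.finrank ℝ (Vs d) = 3 * (d - 1) ∧
    Module.finrank ℝ (Ad2 d) = (d - 1) * (d - 2) / 2 ∧
    Module.finrank ℝ (Sd3 d) = d * (d - 3) / 2 := by
  refine ⟨span_top hd, vt_vs, vt_ad2, vt_sd3, vs_ad2, vs_sd3, ad2_sd3,
    conj_vt, conj_vs, conj_ad2, conj_sd3,
    (finranks_eq hd).1, (finranks_eq hd).2.1, (finranks_eq hd).2.2.1, (finranks_eq hd).2.2.2⟩
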